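/- Define N(α,t) = (α + (1-α)/(1+t))² + 3(1-α)²·(1 - 1/(1+t))² and H(α,t) = log(1+t) - ((2t+t²)/2)·log(N(α,t)) - t - (3/2 - 2α)·t². Then for all α ∈ [0, 1/2] and all t ≥ 0, the partial derivative of H with respect to α equals ((8α² - 16α + 9)t⁴ + (5-4α)t³)/((1+t)²·N(α,t)), and this is nonnegative; in particular H(α,t) ≤ H(1/2,t) for α ∈ [0,1/2]. -/

import Mathlib

/-- N(α,t) from equation (9.4) of the paper. -/
noncomputable def Nfun (α t : ℝ) : ℝ :=
  (α + (1 - α) / (1 + t)) ^ 2 + 3 * (1 - α) ^ 2 * (1 - 1 / (1 + t)) ^ 2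

/-- H(α,t) from equation (9.4) of the paper. -/
noncomputable def Hfun (α t : ℝ) : ℝ :=
  Real.log (1 + t) - ((2 * t + t ^ 2) / 2) * Real.log (Nfun α t) - t - (3 / 2 - 2 * α) * t ^ 2

lemma Npos (α t : ℝ) (hα0 : 0 ≤ α) (hα1 : α ≤ 1 / 2) (ht : 0 ≤ t) : 0 < Nfun α t := by
  have h1t : (0:ℝ) < 1 + t := by linarith
  have hA : 0 < α + (1 - α) / (1 + t) :=
    add_pos_of_nonneg_of_pos hα0 (div_pos (by linarith) h1t)
  have : 0 < (α + (1 - α) / (1 + t)) ^ 2 := by positivity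
  unfold Nfun
  nlinarith [sq_nonneg ((1 - α) * (1 - 1/(1+t)))]

lemma keyDeriv (α t : ℝ) (hα0 : 0 ≤ α) (hα1 : α ≤ 1 / 2) (ht : 0 ≤ t) :
    HasDerivAt (fun a => Hfun a t)
      (((8 * α ^ 2 - 16 * α + 9) * t ^ 4 + (5 - 4 * α) * t ^ 3)
        / ((1 + t) ^ 2 * Nfun α t)) α := by
  have h1t : (0:ℝ) < 1 + t := by linarith
  have hN := Npos α t hα0 hα1 ht
  have h1 : HasDerivAt (fun a : ℝ => (1 - a)) (-1) α := by
    simpa using (hasDerivAt_id α).const_sub 1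
  have h2 : HasDerivAt (fun a : ℝ => (1 - a)/(1+t)) (-1/(1+t)) α := h1.div_const _
  have hA : HasDerivAt (fun a : ℝ => a + (1-a)/(1+t)) (1 + -1/(1+t)) α :=
    (hasDerivAt_id α).add h2
  have hA2 := hA.pow 2
  have hB := ((h1.pow 2).const_mul 3).mul_const ((1 - 1/(1+t))^2)
  have hNd : HasDerivAt (fun a => Nfun a t)
      ((2:ℕ) * (α + (1-α)/(1+t)) ^ 1 * (1 + -1/(1+t))
        + 3 * ((2:ℕ) * (1-α) ^ 1 * (-1)) * (1 - 1/(1+t))^2) α := by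
    simpa [Nfun, Pi.add_def, Pi.pow_def] using hA2.add hB
  have hlog := (hNd.log hN.ne').const_mul ((2 * t + t ^ 2) / 2)
  have hlast : HasDerivAt (fun a : ℝ => (3 / 2 - 2 * a) * t ^ 2) (-2 * t ^ 2) α := by
    have : HasDerivAt (fun a : ℝ => 3 / 2 - 2 * a) (-2) α := by
      simpa using ((hasDerivAt_id α).const_mul 2).const_sub (3/2)
    simpa using this.mul_const (t ^ 2)
  have hH := (((hasDerivAt_const α (Real.log (1+t))).sub hlog).sub
      (hasDerivAt_const α t)).sub hlast
  have hH' : HasDerivAt (fun a => Hfun a t)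
      (0 - (2 * t + t ^ 2) / 2 *
        (((2:ℕ) * (α + (1-α)/(1+t)) ^ 1 * (1 + -1/(1+t))
        + 3 * ((2:ℕ) * (1-α) ^ 1 * (-1)) * (1 - 1/(1+t))^2) / Nfun α t)
      - 0 - -2 * t ^ 2) α := by
    simpa [Hfun, Pi.sub_def] using hH
  convert hH' using 1
  set M : ℝ := (α * (1 + t) + (1 - α)) ^ 2 + 3 * (1 - α) ^ 2 * t ^ 2 with hMdef
  have hNM : Nfun α t = M / (1 + t) ^ 2 := by
    unfold Nfun; rw [hMdef]; field_simp; try ring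
  have hM : M ≠ 0 := by
    intro h
    rw [hNM, h] at hN
    simp at hN
  rw [hNM]
  push_cast
  rw [hMdef] at hM ⊢
  field_simp
  have hM' : (α * (1 + t) + (1 - α)) ^ 2 + t ^ 2 * (1 - α) ^ 2 * 3 ≠ 0 := by
    convert hM using 1; ring
  field_simp
  ring

/-- ∂_α H(α,t) = ((8α²-16α+9)t⁴+(5-4α)t³)/((1+t)²·N(α,t)) ≥ 0 on
[0,1/2] × [0,∞); in particular H(α,t) ≤ H(1/2,t). -/
theorem stmt_3 (α t : ℝ) (hα : α ∈ Set.Icc (0 : ℝ) (1 / 2)) (ht : 0 ≤ t) :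
    deriv (fun a => Hfun a t) α
        = ((8 * α ^ 2 - 16 * α + 9) * t ^ 4 + (5 - 4 * α) * t ^ 3)
          / ((1 + t) ^ 2 * Nfun α t)
    ∧ 0 ≤ ((8 * α ^ 2 - 16 * α + 9) * t ^ 4 + (5 - 4 * α) * t ^ 3)
          / ((1 + t) ^ 2 * Nfun α t)
    ∧ Hfun α t ≤ Hfun (1 / 2) t := by
  obtain ⟨hα0, hα1⟩ := hα
  have h1t : (0:ℝ) < 1 + t := by linarith
  have nonneg : ∀ a : ℝ, 0 ≤ a → a ≤ 1/2 →
      0 ≤ ((8 * a ^ 2 - 16 * a + 9) * t ^ 4 + (5 - 4 * a) * t ^ 3)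
          / ((1 + t) ^ 2 * Nfun a t) := by
    intro a ha0 ha1
    apply div_nonneg
    · nlinarith [sq_nonneg (a - 1), pow_nonneg ht 3, pow_nonneg ht 4]
    · have := Npos a t ha0 ha1 ht
      positivity
  refine ⟨(keyDeriv α t hα0 hα1 ht).deriv, nonneg α hα0 hα1, ?_⟩
  have hmono : MonotoneOn (fun a => Hfun a t) (Set.Icc 0 (1/2)) := by
    apply monotoneOn_of_deriv_nonneg (convex_Icc _ _)
    · intro a ha
      exact ((keyDeriv a t ha.1 ha.2 ht).differentiableAt).continuousAt.continuousWithinAt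
    · intro a ha
      rw [interior_Icc] at ha
      exact ((keyDeriv a t ha.1.le ha.2.le ht).differentiableAt).differentiableWithinAt
    · intro a ha
      rw [interior_Icc] at ha
      rw [(keyDeriv a t ha.1.le ha.2.le ht).deriv]
      exact nonneg a ha.1.le ha.2.le
  exact hmono ⟨hα0, hα1⟩ ⟨by norm_num, le_refl _⟩ hα1
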